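/- A solution of the Weber equation that is positive in the left forbidden region and decays at −∞ is strictly increasing there: W'(x) > 0 for all x ≤ −√λ. -/

import Mathlib

open Filter Real

/-- A solution of the Weber equation, positive in the left forbidden region and
decaying at `-∞`, is strictly increasing there. -/
theorem weber_increasing_left_forbidden_region
    (lam : ℝ) (hlam : 0 < lam)
    (W : ℝ → ℝ) (hW : ContDiff ℝ 2 W)
    (hWeq : ∀ x, deriv (deriv W) x = (x ^ 2 - lam) * W x)
    (hWpos : ∀ x ≤ -Real.sqrt lam, 0 < W x)
    (hWlim : Tendsto W atBot (nhds 0)) :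
    ∀ x ≤ -Real.sqrt lam, 0 < deriv W x := by
  intro x₀ hx₀
  by_contra h
  push_neg at h
  have hsq := Real.sq_sqrt hlam.le
  have hsn := Real.sqrt_nonneg lam
  have key : ∀ y : ℝ, y ≤ -Real.sqrt lam → lam ≤ y ^ 2 := by
    intro y hy
    nlinarith
  have hW1 : ContDiff ℝ 1 (deriv W) := by
    have := (contDiff_succ_iff_deriv (n := 1)).mp (by exact_mod_cast hW)
    exact this.2.2
  have hdiff1 : Differentiable ℝ (deriv W) := hW1.differentiable one_ne_zero
  have hcont1 : Continuous (deriv W) := hdiff1.continuous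
  -- W' is monotone on Iic x₀
  have hmono : MonotoneOn (deriv W) (Set.Iic x₀) := by
    apply monotoneOn_of_deriv_nonneg (convex_Iic x₀) hcont1.continuousOn
      (hdiff1.differentiableOn.mono interior_subset)
    intro x hx
    rw [interior_Iic] at hx
    have hxle : x ≤ -Real.sqrt lam := le_trans hx.le hx₀
    rw [hWeq x]
    exact mul_nonneg (by linarith [key x hxle]) (hWpos x hxle).le
  -- hence W' ≤ 0 on Iic x₀, so W is antitone on Iic x₀
  have hanti : AntitoneOn W (Set.Iic x₀) := by
    apply antitoneOn_of_deriv_nonpos (convex_Iic x₀)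
      (hW.continuous.continuousOn)
      ((hW.differentiable (by norm_num)).differentiableOn.mono interior_subset)
    intro x hx
    rw [interior_Iic] at hx
    exact le_trans (hmono (Set.mem_Iic.mpr hx.le) Set.self_mem_Iic hx.le) h
  have hle : W x₀ ≤ 0 := by
    apply ge_of_tendsto hWlim
    rw [Filter.eventually_atBot]
    exact ⟨x₀, fun y hy => hanti (Set.mem_Iic.mpr hy) Set.self_mem_Iic hy⟩
  exact absurd (hWpos x₀ hx₀) (not_lt.mpr hle)
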